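/- Let m ≥ 1 and let z, z′ be two nondecreasing vectors in ℕ^m (0 ≤ z₁ ≤ … ≤ z_m and 0 ≤ z′₁ ≤ … ≤ z′_m) with z ≠ z′. Let j be the largest index at which z and z′ differ. Then pos(z) < pos(z′) if and only if z_j < z′_j, where pos(z) = Σ_{i=1}^m C(z_i + i − 1, i). -/

import Mathlib

/-- The rank function `pos(z) = C(z₁,1) + C(z₂+1,2) + ⋯ + C(z_m+m-1,m)`,
with `z` zero-indexed so that the `i`-th term is `C(z i + i, i + 1)`. -/
def pos (m : ℕ) (z : Fin m → ℕ) : ℕ :=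
  ∑ i : Fin m, Nat.choose (z i + (i : ℕ)) ((i : ℕ) + 1)

/-- Combinatorial number system bound: if `a` is strictly increasing below `j`,
then `∑_{i<j} C(a i, i+1) < C(a j, j)`. -/
lemma key_choose_sum_lt (a : ℕ → ℕ) : ∀ j, (∀ i, i < j → a i < a (i+1)) →
    (∑ i ∈ Finset.range j, Nat.choose (a i) (i+1)) < Nat.choose (a j) j := by
  intro j
  induction j with
  | zero => simp
  | succ n ih =>
    intro h
    rw [Finset.sum_range_succ]
    have h1 : (∑ i ∈ Finset.range n, Nat.choose (a i) (i+1)) < Nat.choose (a n) n :=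
      ih fun i hi => h i (Nat.lt_succ_of_lt hi)
    have h2 : a n + 1 ≤ a (n+1) := h n (Nat.lt_succ_self n)
    calc (∑ i ∈ Finset.range n, Nat.choose (a i) (i+1)) + Nat.choose (a n) (n+1)
        < Nat.choose (a n) n + Nat.choose (a n) (n+1) := by omega
      _ = Nat.choose (a n + 1) (n+1) := (Nat.choose_succ_succ (a n) n).symm
      _ ≤ Nat.choose (a (n+1)) (n+1) := Nat.choose_le_choose _ h2

/-- One direction: if `z j < z' j` at the last differing index, then `pos z < pos z'`. -/
lemma pos_lt_of_lt (m : ℕ) (z z' : Fin m → ℕ) (hz : Monotone z) (j : Fin m)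
    (hlt : z j < z' j) (hmax : ∀ i : Fin m, j < i → z i = z' i) :
    pos m z < pos m z' := by
  set a : ℕ → ℕ := fun k => (if h : k < m then z ⟨k, h⟩ else 0) + k with ha
  set b : ℕ → ℕ := fun k => (if h : k < m then z' ⟨k, h⟩ else 0) + k with hb
  have hzsum : pos m z = ∑ k ∈ Finset.range m, Nat.choose (a k) (k+1) := by
    rw [pos, ← Fin.sum_univ_eq_sum_range (fun k => Nat.choose (a k) (k+1)) m]
    apply Finset.sum_congr rfl
    intro i _
    simp [ha, i.isLt]
  have hzsum' : pos m z' = ∑ k ∈ Finset.range m, Nat.choose (b k) (k+1) := by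
    rw [pos, ← Fin.sum_univ_eq_sum_range (fun k => Nat.choose (b k) (k+1)) m]
    apply Finset.sum_congr rfl
    intro i _
    simp [hb, i.isLt]
  have hjm : (j : ℕ) + 1 ≤ m := j.isLt
  have split : ∀ f : ℕ → ℕ, ∑ k ∈ Finset.range m, f k =
      ((∑ k ∈ Finset.range j, f k) + f j) + ∑ k ∈ Finset.Ico ((j:ℕ)+1) m, f k := by
    intro f
    rw [← Finset.sum_range_succ, Finset.range_eq_Ico, Finset.range_eq_Ico,
      Finset.sum_Ico_consecutive f (Nat.zero_le _) hjm]
  have tails : (∑ k ∈ Finset.Ico ((j:ℕ)+1) m, Nat.choose (a k) (k+1))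
      = ∑ k ∈ Finset.Ico ((j:ℕ)+1) m, Nat.choose (b k) (k+1) := by
    apply Finset.sum_congr rfl
    intro k hk
    rw [Finset.mem_Ico] at hk
    have hkm : k < m := hk.2
    have : z ⟨k, hkm⟩ = z' ⟨k, hkm⟩ := hmax ⟨k, hkm⟩ (by simpa [Fin.lt_def] using hk.1)
    simp [ha, hb, hkm, this]
  have hkey : (∑ k ∈ Finset.range j, Nat.choose (a k) (k+1)) < Nat.choose (a j) j := by
    apply key_choose_sum_lt
    intro i hi
    have hi1 : i + 1 < m := lt_of_le_of_lt hi j.isLt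
    have hi0 : i < m := Nat.lt_of_succ_lt hi1
    have : z ⟨i, hi0⟩ ≤ z ⟨i+1, hi1⟩ := hz (by simp [Fin.le_def])
    simp only [ha, dif_pos hi0, dif_pos hi1]
    omega
  have haj : a j = z j + j := by simp [ha, j.isLt]
  have hbj : b j = z' j + j := by simp [hb, j.isLt]
  have hmid : (∑ k ∈ Finset.range j, Nat.choose (a k) (k+1)) + Nat.choose (a j) ((j:ℕ)+1)
      < (∑ k ∈ Finset.range j, Nat.choose (b k) (k+1)) + Nat.choose (b j) ((j:ℕ)+1) := by
    have step : Nat.choose (a j) j + Nat.choose (a j) ((j:ℕ)+1) ≤ Nat.choose (b j) ((j:ℕ)+1) := by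
      rw [← Nat.choose_succ_succ]
      apply Nat.choose_le_choose
      omega
    omega
  rw [hzsum, hzsum', split, split, tails]
  omega

/-- For nondecreasing `z ≠ z'` in `ℕ^m`, if `j` is the largest index at which they differ,
then `pos z < pos z'` iff `z j < z' j` (colexicographic monotonicity of `pos`). -/
theorem stmt_2 (m : ℕ) (hm : 1 ≤ m) (z z' : Fin m → ℕ)
    (hz : Monotone z) (hz' : Monotone z') (hne : z ≠ z')
    (j : Fin m) (hj : z j ≠ z' j) (hmax : ∀ i : Fin m, j < i → z i = z' i) :
    pos m z < pos m z' ↔ z j < z' j := by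
  rcases lt_trichotomy (z j) (z' j) with h | h | h
  · exact ⟨fun _ => h, fun _ => pos_lt_of_lt m z z' hz j h hmax⟩
  · exact absurd h hj
  · have : pos m z' < pos m z :=
      pos_lt_of_lt m z' z hz' j h (fun i hi => (hmax i hi).symm)
    constructor
    · intro h2; omega
    · intro h2; omega
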